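/- Let S = S_c ⊔ S_a be an SC set with m = |S|, let N ≥ 0 be an integer, and let σ ∈ D(S, N) additionally satisfy condition (III). Then the union X_σ = ⋃_{(≤₁,τ) ∈ J(σ)} FN_{(≤₁,τ)} of SC Fox–Neuwirth cells, where J(σ) is the set of pruned SC 2-trees (≤₁,τ) on S with σ ∈ D(τ, N), equals the set of all configurations p ∈ Conf(S) satisfying conditions (C1), (C2) and (C3). -/

import Mathlib

/-- The configuration space `Conf S`: the set of injective maps (configurations)
`p : S → ℝ × ℝ`, as a subset of the product space `S → ℝ × ℝ`. -/
def Conf (S : Type*) : Set (S → ℝ × ℝ) := {p | Function.Injective p}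

/-- Condition (I) on a surjection `σ`: consecutive values are distinct. -/
def CondI {S : Type*} {k : ℕ} (σ : Fin k → S) : Prop :=
  ∀ i j : Fin k, (j : ℕ) = (i : ℕ) + 1 → σ i ≠ σ j

/-- Condition (II): no interleaving pattern `i₁ < j₁ < i₂ < j₂` with
`i₁, i₂ ∈ σ⁻¹(s)` and `j₁, j₂ ∈ σ⁻¹(s')` for `s ≠ s'`. -/
def CondII {S : Type*} {k : ℕ} (σ : Fin k → S) : Prop :=
  ¬ ∃ (s s' : S) (i₁ j₁ i₂ j₂ : Fin k),
      s ≠ s' ∧ i₁ < j₁ ∧ j₁ < i₂ ∧ i₂ < j₂ ∧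
      σ i₁ = s ∧ σ i₂ = s ∧ σ j₁ = s' ∧ σ j₂ = s'

/-- `σ ∈ D(S, N)`: a surjection `σ : {1, …, N + |S|} → S` satisfying (I) and (II).
(The condition `k = N + |S|` is imposed as a separate hypothesis in the theorems.) -/
def MemD {S : Type*} {k : ℕ} (σ : Fin k → S) : Prop :=
  Function.Surjective σ ∧ CondI σ ∧ CondII σ

/-- Condition (C1) on a configuration `p`: if some element of `σ⁻¹(s)` lies strictly
between two elements of `σ⁻¹(s')` (for `s ≠ s'`) then `x_s < x_{s'}`. -/
def CondC1 {S : Type*} {k : ℕ} (σ : Fin k → S) (p : S → ℝ × ℝ) : Prop :=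
  ∀ s s' : S, s ≠ s' →
    (∃ i j₁ j₂ : Fin k, σ i = s ∧ σ j₁ = s' ∧ σ j₂ = s' ∧ j₁ < i ∧ i < j₂) →
    (p s).1 < (p s').1

/-- Condition (C2) on a configuration `p`: if `x_s = x_{s'}` (for `s ≠ s'`) and every
element of `σ⁻¹(s)` is smaller than every element of `σ⁻¹(s')` then `y_s < y_{s'}`. -/
def CondC2 {S : Type*} {k : ℕ} (σ : Fin k → S) (p : S → ℝ × ℝ) : Prop :=
  ∀ s s' : S, s ≠ s' → (p s).1 = (p s').1 →
    (∀ i j : Fin k, σ i = s → σ j = s' → i < j) →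
    (p s).2 < (p s').2

/-- Condition (C3) for an SC set `S = S_c ⊔ S_a` (here `Sa ⊆ S` and `S_c = Saᶜ`):
`x_s = 0` for `s ∈ S_a` and `x_s > 0` for `s ∈ S_c`. -/
def CondC3 {S : Type*} (Sa : Set S) (p : S → ℝ × ℝ) : Prop :=
  (∀ s ∈ Sa, (p s).1 = 0) ∧ (∀ s ∉ Sa, 0 < (p s).1)

/-- Condition (III): `σ⁻¹(s)` is a one-element set for every `s ∈ S_a`. -/
def CondIII {S : Type*} {k : ℕ} (Sa : Set S) (σ : Fin k → S) : Prop :=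
  ∀ s ∈ Sa, ∃! i : Fin k, σ i = s

/-- A pruned SC 2-tree on the SC set `S = S_c ⊔ S_a` (with `Sa ⊆ S`): a linear order
`r` and a map `τ : S → Fin (n+1)` monotone with respect to `r`, with `τ⁻¹(0) = S_a`
and `{1, …, n} ⊆ τ(S)`. -/
def IsPrunedSC2Tree {S : Type*} (Sa : Set S) {n : ℕ} (r : S → S → Prop)
    (τ : S → Fin (n + 1)) : Prop :=
  IsLinearOrder S r ∧ (∀ s s', r s s' → τ s ≤ τ s') ∧
  (∀ s, τ s = 0 ↔ s ∈ Sa) ∧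
  (∀ j : Fin (n + 1), j ≠ 0 → ∃ s, τ s = j)

/-- The Fox–Neuwirth cell of an SC 2-tree `(r, τ)`: configurations `p` with
(o) `x_s = 0` for `s ∈ S_a`, `x_s > 0` for `s ∈ S_c`; (i) `τ s < τ s'` implies
`x_s < x_{s'}`; (ii) `τ s = τ s'` and `s <₁ s'` imply `x_s = x_{s'}` and
`y_s < y_{s'}`. -/
def FNcellSC {S : Type*} (Sa : Set S) {n : ℕ} (r : S → S → Prop)
    (τ : S → Fin (n + 1)) : Set (S → ℝ × ℝ) :=
  {p | Function.Injective p ∧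
    (∀ s ∈ Sa, (p s).1 = 0) ∧ (∀ s ∉ Sa, 0 < (p s).1) ∧
    (∀ s s', τ s < τ s' → (p s).1 < (p s').1) ∧
    (∀ s s', τ s = τ s' → r s s' → s ≠ s' →
      (p s).1 = (p s').1 ∧ (p s).2 < (p s').2)}

/-- `σ ∈ D(τ, N)` for an SC 2-tree `(r, τ)`: the additional conditions (B) and (C)
(conditions (I), (II), (III) and surjectivity are imposed separately). -/
def MemDtreeSC {S : Type*} {n k : ℕ} (r : S → S → Prop) (τ : S → Fin (n + 1))
    (σ : Fin k → S) : Prop :=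
  (∀ s s' : S, s ≠ s' →
      (∃ i j₁ j₂ : Fin k, σ i = s ∧ σ j₁ = s' ∧ σ j₂ = s' ∧ j₁ < i ∧ i < j₂) →
      τ s < τ s') ∧
  (∀ s s' : S, τ s = τ s' → r s s' → s ≠ s' →
      ∀ i j : Fin k, σ i = s → σ j = s' → i < j)

/-- For an SC set `S = S_c ⊔ S_a` and `σ ∈ D(S, N)` satisfying (III),
the union `X_σ` of the SC Fox–Neuwirth cells over all pruned SC 2-trees `(r, τ)` on
`S` with `σ ∈ D(τ, N)` equals the set of configurations satisfying (C1), (C2), (C3). -/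
theorem statement3 {S : Type*} [Fintype S] (Sa : Set S) (N k : ℕ)
    (hk : k = N + Fintype.card S) (σ : Fin k → S) (hσ : MemD σ)
    (hIII : CondIII Sa σ) :
    {p : S → ℝ × ℝ | ∃ (n : ℕ) (r : S → S → Prop) (τ : S → Fin (n + 1)),
        IsPrunedSC2Tree Sa r τ ∧ MemDtreeSC r τ σ ∧ p ∈ FNcellSC Sa r τ}
      = {p : S → ℝ × ℝ |
          p ∈ Conf S ∧ CondC1 σ p ∧ CondC2 σ p ∧ CondC3 Sa p} := by

  classical
  ext p
  simp only [Set.mem_setOf_eq, Conf]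
  constructor
  · rintro ⟨n, r, τ, ⟨hlin, hmono, hτ0, hτsurj⟩, ⟨hB, hC⟩, hinj, ho1, ho2, hi, hii⟩
    refine ⟨hinj, ?_, ?_, ho1, ho2⟩
    · intro s s' hne hint
      exact hi s s' (hB s s' hne hint)
    · intro s s' hne hx hall
      have hττ : τ s = τ s' := by
        rcases lt_trichotomy (τ s) (τ s') with h | h | h
        · exact absurd (hi s s' h) (by rw [hx]; exact lt_irrefl _)
        · exact h
        · exact absurd (hi s' s h) (by rw [hx]; exact lt_irrefl _)
      rcases hlin.toTotal.total s s' with hr | hr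
      · exact (hii s s' hττ hr hne).2
      · exfalso
        have hrev := hC s' s hττ.symm hr hne.symm
        obtain ⟨i₀, hi₀⟩ := hσ.1 s
        obtain ⟨j₀, hj₀⟩ := hσ.1 s'
        exact absurd (hall i₀ j₀ hi₀ hj₀) (not_lt.2 (le_of_lt (hrev j₀ i₀ hj₀ hi₀)))
  · rintro ⟨hinj, hC1, hC2, hC3a, hC3b⟩
    set V := Finset.image (fun s => (p s).1)
      (Finset.univ.filter (fun s => s ∉ Sa)) with hVdef
    have hmemV : ∀ s, s ∉ Sa → (p s).1 ∈ V := fun s hs =>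
      Finset.mem_image.2 ⟨s, Finset.mem_filter.2 ⟨Finset.mem_univ s, hs⟩, rfl⟩
    set e := V.orderIsoOfFin rfl with hedef
    set τ : S → Fin (V.card + 1) := fun s =>
      if h : s ∈ Sa then 0 else (e.symm ⟨(p s).1, hmemV s h⟩).succ with hτdef
    set r : S → S → Prop := fun s s' =>
      (p s).1 < (p s').1 ∨ ((p s).1 = (p s').1 ∧ (p s).2 ≤ (p s').2) with hrdef
    have hτlt : ∀ s s', τ s < τ s' ↔ (p s).1 < (p s').1 := by
      intro s s'
      by_cases h : s ∈ Sa <;> by_cases h' : s' ∈ Sa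
      · simp [hτdef, dif_pos h, dif_pos h', hC3a s h, hC3a s' h']
      · simp only [hτdef, dif_pos h, dif_neg h']
        rw [hC3a s h]
        simp [Fin.succ_pos, hC3b s' h']
      · simp only [hτdef, dif_neg h, dif_pos h']
        rw [hC3a s' h']
        simp [Fin.not_lt_zero, not_lt.2 (le_of_lt (hC3b s h))]
      · simp only [hτdef, dif_neg h, dif_neg h', Fin.succ_lt_succ_iff,
          OrderIso.lt_iff_lt, Subtype.mk_lt_mk]
    have hτeq : ∀ s s', τ s = τ s' ↔ (p s).1 = (p s').1 := by
      intro s s'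
      constructor
      · intro h
        rcases lt_trichotomy (p s).1 (p s').1 with hx | hx | hx
        · exact absurd ((hτlt s s').2 hx) (by rw [h]; exact lt_irrefl _)
        · exact hx
        · exact absurd ((hτlt s' s).2 hx) (by rw [h]; exact lt_irrefl _)
      · intro h
        rcases lt_trichotomy (τ s) (τ s') with ht | ht | ht
        · exact absurd ((hτlt s s').1 ht) (by rw [h]; exact lt_irrefl _)
        · exact ht
        · exact absurd ((hτlt s' s).1 ht) (by rw [h]; exact lt_irrefl _)
    -- separation: if x_s = x_{s'} and some preimage of s' comes before one of s,
    -- then all preimages of s' come before all preimages of s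
    have hkey : ∀ s s' : S, s ≠ s' → (p s).1 = (p s').1 →
        ∀ a b : Fin k, σ a = s → σ b = s' → b < a →
        ∀ b' a' : Fin k, σ b' = s' → σ a' = s → b' < a' := by
      intro s s' hne hx a b ha hb hba b' a' hb' ha'
      rcases lt_trichotomy b' a' with h | h | h
      · exact h
      · exact absurd (ha'.symm.trans (h ▸ hb')) hne
      · exfalso
        rcases lt_trichotomy a' b with h2 | h2 | h2
        · exact absurd (hC1 s' s hne.symm ⟨b, a', a, hb, ha', ha, h2, hba⟩)
            (by rw [hx]; exact lt_irrefl _)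
        · exact hne (by rw [← ha', h2, hb])
        · exact absurd (hC1 s s' hne ⟨a', b, b', ha', hb, hb', h2, h⟩)
            (by rw [hx]; exact lt_irrefl _)
    refine ⟨V.card, r, τ, ⟨?_, ?_, ?_, ?_⟩, ⟨?_, ?_⟩, hinj, hC3a, hC3b,
      fun s s' h => (hτlt s s').1 h, ?_⟩
    · -- linear order
      refine { refl := ?_, trans := ?_, antisymm := ?_, total := ?_ }
      · intro s; exact Or.inr ⟨rfl, le_refl _⟩
      · rintro s t u (h1 | ⟨h1, h1'⟩) (h2 | ⟨h2, h2'⟩)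
        · exact Or.inl (lt_trans h1 h2)
        · exact Or.inl (by rw [← h2]; exact h1)
        · exact Or.inl (by rw [h1]; exact h2)
        · exact Or.inr ⟨h1.trans h2, h1'.trans h2'⟩
      · rintro s t (h1 | ⟨h1, h1'⟩) (h2 | ⟨h2, h2'⟩)
        · exact absurd h2 (not_lt.2 (le_of_lt h1))
        · exact absurd h1 (by rw [h2]; exact lt_irrefl _)
        · exact absurd h2 (by rw [h1]; exact lt_irrefl _)
        · exact hinj (Prod.ext h1 (le_antisymm h1' h2'))
      · intro s t
        rcases lt_trichotomy (p s).1 (p t).1 with h | h | h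
        · exact Or.inl (Or.inl h)
        · rcases le_total (p s).2 (p t).2 with h' | h'
          · exact Or.inl (Or.inr ⟨h, h'⟩)
          · exact Or.inr (Or.inr ⟨h.symm, h'⟩)
        · exact Or.inr (Or.inl h)
    · -- monotone
      rintro s s' (h | ⟨h, _⟩)
      · exact le_of_lt ((hτlt s s').2 h)
      · exact le_of_eq ((hτeq s s').2 h)
    · -- τ⁻¹(0) = Sa
      intro s
      by_cases h : s ∈ Sa
      · simp [hτdef, dif_pos h, h]
      · simp [hτdef, dif_neg h, h, Fin.succ_ne_zero]
    · -- surjectivity onto nonzero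
      intro j hj
      obtain ⟨j', rfl⟩ : ∃ j' : Fin V.card, j'.succ = j := ⟨j.pred hj, Fin.succ_pred j hj⟩
      obtain ⟨s, hs, hps⟩ := Finset.mem_image.1 (e j').2
      have hs' : s ∉ Sa := (Finset.mem_filter.1 hs).2
      refine ⟨s, ?_⟩
      have : (⟨(p s).1, hmemV s hs'⟩ : {x // x ∈ V}) = e j' := Subtype.ext hps
      simp only [hτdef, dif_neg hs', this, OrderIso.symm_apply_apply]
    · -- condition (B)
      intro s s' hne hint
      exact (hτlt s s').2 (hC1 s s' hne hint)
    · -- condition (C)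
      intro s s' hττ hr hne i j hi hj
      have hx : (p s).1 = (p s').1 := (hτeq s s').1 hττ
      by_contra hlt
      have hji : j < i := by
        rcases lt_trichotomy i j with h | h | h
        · exact absurd h hlt
        · exact absurd (by rw [← hi, h, hj]) hne
        · exact h
      have hrev := hC2 s' s hne.symm hx.symm (fun b' a' hb' ha' =>
        hkey s s' hne hx i j hi hj hji b' a' hb' ha')
      rcases hr with h | ⟨_, h⟩
      · exact absurd h (by rw [hx]; exact lt_irrefl _)
      · exact absurd hrev (not_lt.2 h)
    · -- FN cell condition (ii)
      intro s s' hττ hr hne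
      have hx : (p s).1 = (p s').1 := (hτeq s s').1 hττ
      have hy : (p s).2 ≤ (p s').2 := by
        rcases hr with h | ⟨_, h⟩
        · exact absurd h (by rw [hx]; exact lt_irrefl _)
        · exact h
      refine ⟨hx, lt_of_le_of_ne hy fun hy' => hne (hinj (Prod.ext hx hy'))⟩
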